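/- arXiv:2506.10173 — 2 statements merged into one kernel-verified Lean document; each statement's English description precedes it below -/
import Mathlib

section
/- Let d, d', n be positive integers, let E = EuclideanSpace ℝ (Fin d) and E' be any type, let z_1,…,z_n ∈ E and y_1,…,y_n ∈ E'. Let k_Z : E → E → ℝ be a symmetric normalized kernel such that for each i ∈ {1,…,n−1} the map w ↦ k_Z(z_i, w) is differentiable at z_n, and let k_Y : E' → E' → ℝ be a symmetric normalized kernel. Define G : E → ℝ by G(w) = (1/n⁴) · Σ_{i=1}^n Σ_{j=1}^n k_Z(z'_i, z'_j)² · k_Y(y_i, y_j)², where z'_m = z_m for m < n and z'_n = w (so G is the conditional inverse-RKE loss L_Cond-IRKE viewed as a function of the n-th point). Then G is differentiable at z_n and its gradient there equals ∇G(z_n) = (4/n⁴) · Σ_{i=1}^{n−1} k_Z(z_i, z_n) · k_Y(y_i, y_n)² · ∇_w k_Z(z_i, w)|_{w = z_n}. -/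
open scoped BigOperators

/-- Gradient of the conditional inverse-RKE loss with respect to the last point:
for symmetric normalized kernels `k_Z`, `k_Y`, the function
`G w = (1/n⁴) ∑ᵢ∑ⱼ k_Z(z'ᵢ, z'ⱼ)² k_Y(yᵢ, yⱼ)²` (where `z'` replaces the last
point by `w`) is differentiable at `zₙ` with gradient
`(4/n⁴) ∑_{i<n} k_Z(zᵢ, zₙ) k_Y(yᵢ, yₙ)² • ∇ₙ k_Z(zᵢ, ·)`.  Here `n = m + 1`. -/
theorem cond_irke_gradient (d d' m : ℕ) (hd : 0 < d) (hd' : 0 < d') {E' : Type*}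
    (kZ : EuclideanSpace ℝ (Fin d) → EuclideanSpace ℝ (Fin d) → ℝ)
    (kY : E' → E' → ℝ)
    (hZsymm : ∀ x y, kZ x y = kZ y x) (hZnorm : ∀ x, kZ x x = 1)
    (hYsymm : ∀ u v, kY u v = kY v u) (hYnorm : ∀ u, kY u u = 1)
    (z : Fin (m + 1) → EuclideanSpace ℝ (Fin d))
    (y : Fin (m + 1) → E')
    (hdiff : ∀ i : Fin m,
      DifferentiableAt ℝ (fun w => kZ (z i.castSucc) w) (z (Fin.last m)))
    (G : EuclideanSpace ℝ (Fin d) → ℝ)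
    (hG : G = fun w =>
      (1 / ((m : ℝ) + 1) ^ 4) *
        ∑ i : Fin (m + 1), ∑ j : Fin (m + 1),
          (kZ (Function.update z (Fin.last m) w i)
             (Function.update z (Fin.last m) w j)) ^ 2 * (kY (y i) (y j)) ^ 2) :
    DifferentiableAt ℝ G (z (Fin.last m)) ∧
      gradient G (z (Fin.last m)) =
        (4 / ((m : ℝ) + 1) ^ 4) •
          ∑ i : Fin m,
            (kZ (z i.castSucc) (z (Fin.last m)) * (kY (y i.castSucc) (y (Fin.last m))) ^ 2) •
              gradient (fun w => kZ (z i.castSucc) w) (z (Fin.last m)) := by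
  set x : EuclideanSpace ℝ (Fin d) := z (Fin.last m) with hx
  set N : ℝ := 1 / ((m : ℝ) + 1) ^ 4 with hN
  set f : Fin m → EuclideanSpace ℝ (Fin d) → ℝ := fun i w => kZ (z i.castSucc) w with hf
  set c : Fin m → ℝ := fun i => N * (2 * (kY (y i.castSucc) (y (Fin.last m))) ^ 2) with hc
  set A : ℝ := N * ((∑ i : Fin m, ∑ j : Fin m,
      (kZ (z i.castSucc) (z j.castSucc)) ^ 2 * (kY (y i.castSucc) (y j.castSucc)) ^ 2) + 1)
    with hA
  have hGeq : G = fun w => A + ∑ i : Fin m, c i * (f i w * f i w) := by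
    rw [hG]
    funext w
    have hu1 : ∀ i : Fin m, Function.update z (Fin.last m) w i.castSucc = z i.castSucc :=
      fun i => Function.update_of_ne (Fin.castSucc_lt_last i).ne _ _
    have hu2 : Function.update z (Fin.last m) w (Fin.last m) = w :=
      Function.update_self _ _ _
    simp only [Fin.sum_univ_castSucc, hu1, hu2, hZnorm, hYnorm, one_pow, mul_one]
    have hsymmZ : ∀ j : Fin m, kZ w (z j.castSucc) = kZ (z j.castSucc) w := fun j => hZsymm _ _
    have hsymmY : ∀ j : Fin (m + 1), kY (y (Fin.last m)) (y j) = kY (y j) (y (Fin.last m)) :=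
      fun j => hYsymm _ _
    simp only [hsymmZ, hsymmY]
    have h2 : ∑ i : Fin m, c i * (f i w * f i w)
        = N * (2 * ∑ i : Fin m, (kZ (z i.castSucc) w) ^ 2
            * (kY (y i.castSucc) (y (Fin.last m))) ^ 2) := by
      rw [Finset.mul_sum, Finset.mul_sum]
      refine Finset.sum_congr rfl fun i _ => ?_
      simp only [hc, hf]
      ring
    rw [h2, hA, hN, Finset.sum_add_distrib]
    ring
  -- gradients
  set g : Fin m → EuclideanSpace ℝ (Fin d) := fun i => gradient (fun w => kZ (z i.castSucc) w) x with hg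
  have hgi : ∀ i : Fin m, HasGradientAt (f i) (g i) x := fun i =>
    (hdiff i).hasGradientAt
  set toD := InnerProductSpace.toDual ℝ (EuclideanSpace ℝ (Fin d)) with htoD
  have hFDi : ∀ i : Fin m, HasFDerivAt (f i) (toD (g i)) x := fun i => (hgi i).hasFDerivAt
  have hterm : ∀ i : Fin m, HasFDerivAt (fun w => c i * (f i w * f i w))
      (c i • (f i x • toD (g i) + f i x • toD (g i))) x := fun i =>
    ((hFDi i).mul (hFDi i)).const_mul (c i)
  have hsum : HasFDerivAt (fun w => A + ∑ i : Fin m, c i * (f i w * f i w))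
      (∑ i : Fin m, c i • (f i x • toD (g i) + f i x • toD (g i))) x := by
    exact (HasFDerivAt.fun_sum (fun i _ => hterm i)).const_add A
  set v : EuclideanSpace ℝ (Fin d) := ∑ i : Fin m, (c i * (2 * f i x)) • g i with hv
  have hDv : toD v = ∑ i : Fin m, c i • (f i x • toD (g i) + f i x • toD (g i)) := by
    rw [hv, map_sum]
    refine Finset.sum_congr rfl fun i _ => ?_
    rw [map_smul]
    module
  have hGradG : HasGradientAt G v x := by
    rw [hGeq, hasGradientAt_iff_hasFDerivAt, hDv]
    exact hsum
  refine ⟨hGradG.differentiableAt, ?_⟩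
  rw [hGradG.gradient]
  rw [hv, Finset.smul_sum]
  refine Finset.sum_congr rfl fun i _ => ?_
  rw [smul_smul]
  congr 1
  simp only [hc, hf, hN]
  have : ((m : ℝ) + 1) ^ 4 ≠ 0 := by positivity
  field_simp
  ring
end

section
/- Let d, n be positive integers with n ≥ 1, let E = EuclideanSpace ℝ (Fin d), let σ > 0, and let k be the Gaussian kernel k(x,y) = exp(−‖x − y‖² / (2σ²)). Let z_1,…,z_n ∈ E and define F : E → ℝ by F(w) = (1/n²) Σ_{i,j=1}^n k(z'_i, z'_j)², where z'_m = z_m for m < n and z'_n = w. Then F is differentiable at z_n and its gradient there equals ∇F(z_n) = (4/(n²σ²)) · Σ_{i=1}^{n−1} exp(−‖z_i − z_n‖²/σ²) · (z_i − z_n). -/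
open scoped BigOperators

theorem gauss_grad {E : Type*} [NormedAddCommGroup E] [InnerProductSpace ℝ E] [CompleteSpace E]
    (σ : ℝ) (a w : E) :
    HasGradientAt (fun w => Real.exp (-‖a - w‖ ^ 2 / σ ^ 2))
      (((2 / σ ^ 2) * Real.exp (-‖a - w‖ ^ 2 / σ ^ 2)) • (a - w)) w := by
  have h1 : HasFDerivAt (fun w : E => a - w) (-(ContinuousLinearMap.id ℝ E)) w :=
    (hasFDerivAt_id w).const_sub a
  have h2 : HasFDerivAt (fun w : E => (inner ℝ (a - w) (a - w) : ℝ))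
      ((fderivInnerCLM ℝ (a - w, a - w)).comp
        ((-(ContinuousLinearMap.id ℝ E)).prod (-(ContinuousLinearMap.id ℝ E)))) w :=
    HasFDerivAt.inner (𝕜 := ℝ) h1 h1
  have h3 := ((h2.const_mul (-1 / σ ^ 2)).exp)
  have hfun : (fun x : E => Real.exp (-1 / σ ^ 2 * (inner ℝ (a - x) (a - x) : ℝ)))
      = fun x => Real.exp (-‖a - x‖ ^ 2 / σ ^ 2) := by
    funext x
    rw [real_inner_self_eq_norm_sq]
    congr 1
    ring
  rw [hfun, real_inner_self_eq_norm_sq] at h3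
  rw [hasGradientAt_iff_hasFDerivAt]
  refine h3.congr_fderiv ?_
  ext v
  simp only [InnerProductSpace.toDual_apply_apply, ContinuousLinearMap.smul_apply,
    ContinuousLinearMap.comp_apply, ContinuousLinearMap.prod_apply,
    ContinuousLinearMap.neg_apply, ContinuousLinearMap.id_apply, fderivInnerCLM_apply,
    real_inner_smul_left, smul_eq_mul, inner_neg_right, inner_neg_left]
  rw [real_inner_comm v (a - w)]
  have : Real.exp (-1 / σ ^ 2 * ‖a - w‖ ^ 2) = Real.exp (-‖a - w‖ ^ 2 / σ ^ 2) := by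
    congr 1; ring
  rw [this]
  ring

theorem irke_sum_expand (d m : ℕ) (σ : ℝ) (hσ : σ ≠ 0)
    (z : Fin (m + 1) → EuclideanSpace ℝ (Fin d)) (w : EuclideanSpace ℝ (Fin d)) :
    (1 / ((m : ℝ) + 1) ^ 2) *
        ∑ i : Fin (m + 1), ∑ j : Fin (m + 1),
          (Real.exp (-‖(Function.update z (Fin.last m) w i)
             - (Function.update z (Fin.last m) w j)‖ ^ 2 / (2 * σ ^ 2))) ^ 2
    = ((1 / ((m : ℝ) + 1) ^ 2) * (∑ i : Fin m, ∑ j : Fin m,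
        Real.exp (-‖z i.castSucc - z j.castSucc‖ ^ 2 / σ ^ 2)) + (1 / ((m : ℝ) + 1) ^ 2))
      + (2 * (1 / ((m : ℝ) + 1) ^ 2)) *
        ∑ i : Fin m, Real.exp (-‖z i.castSucc - w‖ ^ 2 / σ ^ 2) := by
  have hexp : ∀ a b : EuclideanSpace ℝ (Fin d),
      (Real.exp (-‖a - b‖ ^ 2 / (2 * σ ^ 2))) ^ 2 = Real.exp (-‖a - b‖ ^ 2 / σ ^ 2) := by
    intro a b
    rw [sq, ← Real.exp_add]
    congr 1
    field_simp
    ring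
  have hne : ∀ i : Fin m, (Fin.castSucc i) ≠ Fin.last m := fun i => (Fin.castSucc_lt_last i).ne
  have hupd : ∀ (i : Fin m),
      Function.update z (Fin.last m) w i.castSucc = z i.castSucc := fun i =>
    Function.update_of_ne (hne i) _ _
  simp only [Fin.sum_univ_castSucc, hupd, Function.update_self, hexp, sub_self, norm_zero,
    ne_eq, OfNat.ofNat_ne_zero, not_false_eq_true, zero_pow, neg_zero, zero_div, Real.exp_zero,
    one_pow]
  simp only [norm_sub_rev w]
  rw [Finset.sum_add_distrib]
  ring

/-- Gradient of the inverse-RKE loss with the Gaussian kernel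
`k(x,y) = exp(−‖x−y‖²/(2σ²))` with respect to the last point: the function
`F w = (1/n²) ∑ᵢ∑ⱼ k(z'ᵢ, z'ⱼ)²` (where `z'` replaces the last point by `w`)
is differentiable at `zₙ` with gradient
`(4/(n²σ²)) ∑_{i<n} exp(−‖zᵢ−zₙ‖²/σ²) • (zᵢ − zₙ)`.  Here `n = m + 1`. -/
theorem irke_gradient_gaussian (d m : ℕ) (hd : 0 < d) (σ : ℝ) (hσ : 0 < σ)
    (k : EuclideanSpace ℝ (Fin d) → EuclideanSpace ℝ (Fin d) → ℝ)
    (hk : k = fun x y => Real.exp (-‖x - y‖ ^ 2 / (2 * σ ^ 2)))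
    (z : Fin (m + 1) → EuclideanSpace ℝ (Fin d))
    (F : EuclideanSpace ℝ (Fin d) → ℝ)
    (hF : F = fun w =>
      (1 / ((m : ℝ) + 1) ^ 2) *
        ∑ i : Fin (m + 1), ∑ j : Fin (m + 1),
          (k (Function.update z (Fin.last m) w i)
             (Function.update z (Fin.last m) w j)) ^ 2) :
    DifferentiableAt ℝ F (z (Fin.last m)) ∧
      gradient F (z (Fin.last m)) =
        (4 / (((m : ℝ) + 1) ^ 2 * σ ^ 2)) •
          ∑ i : Fin m,
            Real.exp (-‖z i.castSucc - z (Fin.last m)‖ ^ 2 / σ ^ 2) •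
              (z i.castSucc - z (Fin.last m)) := by
  have hσ' : σ ≠ 0 := ne_of_gt hσ
  have hn : ((m : ℝ) + 1) ≠ 0 := by positivity
  set x := z (Fin.last m) with hx
  set c : ℝ := 1 / ((m : ℝ) + 1) ^ 2 with hc
  set C : ℝ := ∑ i : Fin m, ∑ j : Fin m,
      Real.exp (-‖z i.castSucc - z j.castSucc‖ ^ 2 / σ ^ 2) with hC
  have hF' : F = fun w => (c * C + c) + (2 * c) *
      ∑ i : Fin m, Real.exp (-‖z i.castSucc - w‖ ^ 2 / σ ^ 2) := by
    funext w
    rw [hF, hk]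
    exact irke_sum_expand d m σ hσ' z w
  have hgrad : ∀ i : Fin m, HasFDerivAt
      (fun w => Real.exp (-‖z i.castSucc - w‖ ^ 2 / σ ^ 2))
      ((InnerProductSpace.toDual ℝ (EuclideanSpace ℝ (Fin d)))
        (((2 / σ ^ 2) * Real.exp (-‖z i.castSucc - x‖ ^ 2 / σ ^ 2)) • (z i.castSucc - x))) x :=
    fun i => (gauss_grad σ (z i.castSucc) x).hasFDerivAt
  have hgd : HasFDerivAt
      (fun w => ∑ i : Fin m, Real.exp (-‖z i.castSucc - w‖ ^ 2 / σ ^ 2))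
      (∑ i : Fin m, (InnerProductSpace.toDual ℝ (EuclideanSpace ℝ (Fin d)))
        (((2 / σ ^ 2) * Real.exp (-‖z i.castSucc - x‖ ^ 2 / σ ^ 2)) • (z i.castSucc - x))) x :=
    HasFDerivAt.fun_sum fun i _ => hgrad i
  have hFd : HasFDerivAt F ((2 * c) •
      ∑ i : Fin m, (InnerProductSpace.toDual ℝ (EuclideanSpace ℝ (Fin d)))
        (((2 / σ ^ 2) * Real.exp (-‖z i.castSucc - x‖ ^ 2 / σ ^ 2)) • (z i.castSucc - x))) x := by
    rw [hF']
    exact (hgd.const_mul (2 * c)).const_add (c * C + c)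
  have hG : HasGradientAt F
      ((4 / (((m : ℝ) + 1) ^ 2 * σ ^ 2)) •
        ∑ i : Fin m, Real.exp (-‖z i.castSucc - x‖ ^ 2 / σ ^ 2) • (z i.castSucc - x)) x := by
    rw [hasGradientAt_iff_hasFDerivAt]
    have key : (InnerProductSpace.toDual ℝ (EuclideanSpace ℝ (Fin d)))
        ((4 / (((m : ℝ) + 1) ^ 2 * σ ^ 2)) •
          ∑ i : Fin m, Real.exp (-‖z i.castSucc - x‖ ^ 2 / σ ^ 2) • (z i.castSucc - x))
        = (2 * c) • ∑ i : Fin m, (InnerProductSpace.toDual ℝ (EuclideanSpace ℝ (Fin d)))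
          (((2 / σ ^ 2) * Real.exp (-‖z i.castSucc - x‖ ^ 2 / σ ^ 2)) • (z i.castSucc - x)) := by
      rw [← map_sum, ← map_smul]
      congr 1
      rw [Finset.smul_sum, Finset.smul_sum]
      refine Finset.sum_congr rfl fun i _ => ?_
      rw [smul_smul, smul_smul]
      congr 1
      rw [hc]
      field_simp
      ring
    rw [key]
    exact hFd
  exact ⟨hG.differentiableAt, hG.gradient⟩
end
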